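/- Let V be a finite-dimensional real inner product space and let g : [0,∞) → L(V) be a semigroup satisfying the boundedness assumption. Let V = V_1 ⊕ V_2 be a decomposition into subspaces invariant under all g(x) such that g(x) restricted to V_1 is invertible for all x ≥ 0 and g(x) restricted to V_2 is zero for all x > 0. Then for every nonzero v ∈ V_1, the limit as x → 0 from the right of ‖g(x)v‖/‖v‖ equals 1. -/

import Mathlib

open scoped RealInnerProductSpace
open Module

lemma det_norm_bound {E : Type*} [NormedAddCommGroup E] [InnerProductSpace ℝ E]
    [FiniteDimensional ℝ E] (hm : 0 < finrank ℝ E)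
    (S : E →ₗ[ℝ] E) (N : ℝ) (hN0 : 0 ≤ N) (hN : ∀ w : E, ‖S w‖ ≤ N * ‖w‖) :
    |LinearMap.det S| ≤ N ^ finrank ℝ E ∧
      ∀ v : E, |LinearMap.det S| * ‖v‖ ≤ ‖S v‖ * N ^ (finrank ℝ E - 1) := by
  set n := finrank ℝ E with hn
  set T : E →ₗ[ℝ] E := LinearMap.adjoint S ∘ₗ S with hT_def
  have hT : T.IsSymmetric := by
    intro x y
    simp only [hT_def, LinearMap.coe_comp, Function.comp_apply]
    rw [LinearMap.adjoint_inner_left, LinearMap.adjoint_inner_right]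
  let e := hT.eigenvectorBasis hn.symm
  let μ := hT.eigenvalues hn.symm
  have he : ∀ i, T (e i) = μ i • e i := fun i => hT.apply_eigenvectorBasis hn.symm i
  have hnorm_e : ∀ i, ‖e i‖ = 1 := fun i => e.orthonormal.1 i
  have hμ : ∀ i, μ i = ‖S (e i)‖ ^ 2 := by
    intro i
    have h1 : ⟪T (e i), e i⟫ = μ i := by
      rw [he i, real_inner_smul_left, real_inner_self_eq_norm_sq, hnorm_e i]
      ring
    have h2 : ⟪T (e i), e i⟫ = ‖S (e i)‖ ^ 2 := by
      simp only [hT_def, LinearMap.coe_comp, Function.comp_apply]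
      rw [LinearMap.adjoint_inner_left, real_inner_self_eq_norm_sq]
    rw [← h1, h2]
  have hμ0 : ∀ i, 0 ≤ μ i := fun i => (hμ i) ▸ sq_nonneg _
  have hμN : ∀ i, μ i ≤ N ^ 2 := by
    intro i
    rw [hμ i]
    have := hN (e i)
    rw [hnorm_e i, mul_one] at this
    exact pow_le_pow_left₀ (norm_nonneg _) this 2
  -- determinant of T is the product of eigenvalues
  have hdetT : LinearMap.det T = ∏ i, μ i := by
    have hmat : LinearMap.toMatrix e.toBasis e.toBasis T = Matrix.diagonal μ := by
      ext i j
      have hrepr : e.toBasis.repr (e j) = Finsupp.single j 1 := by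
        rw [← OrthonormalBasis.coe_toBasis, Basis.repr_self]
      rw [LinearMap.toMatrix_apply, OrthonormalBasis.coe_toBasis, he j, map_smul, hrepr]
      simp only [Finsupp.smul_single, smul_eq_mul, mul_one,
        Finsupp.single_apply, Matrix.diagonal_apply]
      rcases eq_or_ne i j with h | h
      · subst h; simp
      · simp [h, h.symm]
    rw [← LinearMap.det_toMatrix e.toBasis, hmat, Matrix.det_diagonal]
  have hdetT' : LinearMap.det T = (LinearMap.det S) ^ 2 := by
    have hadj : LinearMap.det (LinearMap.adjoint S) = LinearMap.det S := by
      let b := stdOrthonormalBasis ℝ E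
      rw [← LinearMap.det_toMatrix b.toBasis, LinearMap.toMatrix_adjoint,
        Matrix.det_conjTranspose, ← LinearMap.det_toMatrix b.toBasis S]
      simp
    rw [hT_def, LinearMap.det_comp, hadj]
    ring
  constructor
  · -- |det S| ≤ N ^ n
    have h1 : (LinearMap.det S) ^ 2 ≤ (N ^ n) ^ 2 := by
      rw [← hdetT', hdetT]
      calc ∏ i, μ i ≤ ∏ _i : Fin n, N ^ 2 :=
            Finset.prod_le_prod (fun i _ => hμ0 i) (fun i _ => hμN i)
        _ = (N ^ n) ^ 2 := by rw [Finset.prod_const, Finset.card_univ, Fintype.card_fin]; ring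
    calc |LinearMap.det S| = Real.sqrt ((LinearMap.det S) ^ 2) := by
          rw [Real.sqrt_sq_eq_abs]
      _ ≤ Real.sqrt ((N ^ n) ^ 2) := Real.sqrt_le_sqrt h1
      _ = N ^ n := Real.sqrt_sq (pow_nonneg hN0 n)
  · intro v
    have hexp : ‖S v‖ ^ 2 = ∑ i, μ i * ⟪v, e i⟫ ^ 2 := by
      have h1 : ‖S v‖ ^ 2 = ⟪v, T v⟫ := by
        simp only [hT_def, LinearMap.coe_comp, Function.comp_apply]
        rw [LinearMap.adjoint_inner_right, real_inner_self_eq_norm_sq]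
      have h2 : ⟪v, T v⟫ = ∑ i, ⟪v, e i⟫ * ⟪e i, T v⟫ :=
        (e.sum_inner_mul_inner v (T v)).symm
      have h3 : ∀ i, ⟪e i, T v⟫ = μ i * ⟪v, e i⟫ := by
        intro i
        rw [← hT (e i) v, he i, real_inner_smul_left, real_inner_comm]
      rw [h1, h2]
      exact Finset.sum_congr rfl fun i _ => by rw [h3 i]; ring
    have hvexp : ‖v‖ ^ 2 = ∑ i, ⟪v, e i⟫ ^ 2 := by
      have := e.sum_inner_mul_inner v v
      rw [real_inner_self_eq_norm_sq] at this
      rw [← this]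
      exact Finset.sum_congr rfl fun i _ => by rw [real_inner_comm (e i) v]; ring
    have hkey : ∀ i : Fin n, ∏ j, μ j ≤ μ i * (N ^ 2) ^ (n - 1) := by
      intro i
      have h1 : ∏ j, μ j = μ i * ∏ j ∈ Finset.univ.erase i, μ j :=
        (Finset.mul_prod_erase Finset.univ μ (Finset.mem_univ i)).symm
      have h2 : ∏ j ∈ Finset.univ.erase i, μ j ≤ (N ^ 2) ^ (n - 1) := by
        calc ∏ j ∈ Finset.univ.erase i, μ j ≤ ∏ _j ∈ Finset.univ.erase i, N ^ 2 :=
              Finset.prod_le_prod (fun j _ => hμ0 j) (fun j _ => hμN j)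
          _ = (N ^ 2) ^ (n - 1) := by
              rw [Finset.prod_const, Finset.card_erase_of_mem (Finset.mem_univ i),
                Finset.card_univ, Fintype.card_fin]
      rw [h1]
      exact mul_le_mul_of_nonneg_left h2 (hμ0 i)
    have hsq : (LinearMap.det S) ^ 2 * ‖v‖ ^ 2 ≤ ‖S v‖ ^ 2 * (N ^ (n - 1)) ^ 2 := by
      rw [hvexp, hexp, Finset.mul_sum, Finset.sum_mul]
      apply Finset.sum_le_sum
      intro i _
      have : (LinearMap.det S) ^ 2 * ⟪v, e i⟫ ^ 2 ≤ (μ i * (N ^ 2) ^ (n - 1)) * ⟪v, e i⟫ ^ 2 := by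
        apply mul_le_mul_of_nonneg_right _ (sq_nonneg _)
        rw [← hdetT', hdetT]
        exact hkey i
      calc (LinearMap.det S) ^ 2 * ⟪v, e i⟫ ^ 2 ≤ (μ i * (N ^ 2) ^ (n - 1)) * ⟪v, e i⟫ ^ 2 := this
        _ = μ i * ⟪v, e i⟫ ^ 2 * (N ^ (n - 1)) ^ 2 := by
            rw [← pow_mul, mul_comm 2 (n - 1), pow_mul]; ring
    calc |LinearMap.det S| * ‖v‖ = Real.sqrt ((LinearMap.det S) ^ 2 * ‖v‖ ^ 2) := by
          rw [Real.sqrt_mul (sq_nonneg _), Real.sqrt_sq_eq_abs, Real.sqrt_sq (norm_nonneg _)]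
      _ ≤ Real.sqrt (‖S v‖ ^ 2 * (N ^ (n - 1)) ^ 2) := Real.sqrt_le_sqrt hsq
      _ = ‖S v‖ * N ^ (n - 1) := by
          rw [Real.sqrt_mul (sq_nonneg _), Real.sqrt_sq (norm_nonneg _),
            Real.sqrt_sq (pow_nonneg hN0 _)]

open scoped RealInnerProductSpace
open Module Filter Set




/-- Under the boundedness assumption, on the invertible part `V₁` of the
decomposition `V = V₁ ⊕ V₂` (with `g` vanishing on `V₂` for `x > 0`), for every nonzero
`v ∈ V₁` the ratio `‖g x v‖ / ‖v‖` tends to `1` as `x → 0⁺`. -/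
theorem norm_limit_one
    {V : Type*} [NormedAddCommGroup V] [InnerProductSpace ℝ V] [FiniteDimensional ℝ V]
    (g : ℝ → V →L[ℝ] V)
    (hg0 : g 0 = 1)
    (hgadd : ∀ x y : ℝ, 0 ≤ x → 0 ≤ y → g (x + y) = g x * g y)
    (f : ℝ → ℝ)
    (hf0 : f 0 = 1)
    (hf_rc : ContinuousWithinAt f (Set.Ici 0) 0)
    (hf_loc : ∀ K : Set ℝ, IsCompact K → ∃ C : ℝ, ∀ x ∈ K, |f x| ≤ C)
    (hgf : ∀ x : ℝ, 0 ≤ x → ‖g x‖ ≤ f x)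
    (V₁ V₂ : Submodule ℝ V)
    (hcompl : IsCompl V₁ V₂)
    (hinv₁ : ∀ x : ℝ, 0 ≤ x → ∀ v ∈ V₁, g x v ∈ V₁)
    (hinv₂ : ∀ x : ℝ, 0 ≤ x → ∀ v ∈ V₂, g x v ∈ V₂)
    (hbij : ∀ x : ℝ, 0 ≤ x →
      Submodule.map (g x : V →ₗ[ℝ] V) V₁ = V₁ ∧ Disjoint (LinearMap.ker (g x : V →ₗ[ℝ] V)) V₁)
    (hzero : ∀ x : ℝ, 0 < x → ∀ v ∈ V₂, g x v = 0) :
    ∀ v ∈ V₁, v ≠ 0 →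
      Filter.Tendsto (fun x : ℝ => ‖g x v‖ / ‖v‖)
        (nhdsWithin 0 (Set.Ioi 0)) (nhds 1) := by
  intro v hv hvne
  classical
  set m := finrank ℝ V₁ with hm_def
  set vE : V₁ := ⟨v, hv⟩ with hvE_def
  have hvE_ne : vE ≠ 0 := fun h => hvne (congrArg Subtype.val h)
  have hm : 0 < m := Module.finrank_pos_iff.mpr ⟨⟨vE, 0, hvE_ne⟩⟩
  -- the restricted operators on V₁
  set A : ℝ → (V₁ →ₗ[ℝ] V₁) :=
    fun x => if hx : 0 ≤ x then ((g x : V →ₗ[ℝ] V).restrict (hinv₁ x hx)) else 0 with hA_def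
  have hA_apply : ∀ (x : ℝ), 0 ≤ x → ∀ w : V₁, ((A x w : V₁) : V) = g x (w : V) := by
    intro x hx w
    simp only [hA_def, dif_pos hx]
    rfl
  have hA_norm : ∀ (x : ℝ), 0 ≤ x → ∀ w : V₁, ‖A x w‖ = ‖g x (w : V)‖ := by
    intro x hx w
    rw [← hA_apply x hx w]
    rfl
  have hf_nonneg : ∀ x : ℝ, 0 ≤ x → 0 ≤ f x :=
    fun x hx => (norm_nonneg (g x)).trans (hgf x hx)
  have hA_bound : ∀ (x : ℝ), 0 ≤ x → ∀ w : V₁, ‖A x w‖ ≤ f x * ‖w‖ := by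
    intro x hx w
    rw [hA_norm x hx w]
    calc ‖g x (w : V)‖ ≤ ‖g x‖ * ‖(w : V)‖ := (g x).le_opNorm _
      _ ≤ f x * ‖(w : V)‖ := mul_le_mul_of_nonneg_right (hgf x hx) (norm_nonneg _)
      _ = f x * ‖w‖ := rfl
  have hA_mul : ∀ x y : ℝ, 0 ≤ x → 0 ≤ y → A (x + y) = A x ∘ₗ A y := by
    intro x y hx hy
    ext w
    rw [LinearMap.comp_apply]
    rw [hA_apply (x + y) (add_nonneg hx hy) w, hA_apply x hx, hA_apply y hy, hgadd x y hx hy]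
    rfl
  set d : ℝ → ℝ := fun x => LinearMap.det (A x) with hd_def
  have hd_mul : ∀ x y : ℝ, 0 ≤ x → 0 ≤ y → d (x + y) = d x * d y := by
    intro x y hx hy
    simp only [hd_def]
    rw [hA_mul x y hx hy, LinearMap.det_comp]
  have hd0 : d 0 = 1 := by
    have hA0 : A 0 = LinearMap.id := by
      ext w
      rw [hA_apply 0 le_rfl w, hg0]
      rfl
    simp only [hd_def, hA0, LinearMap.det_id]
  have hA_bij : ∀ x : ℝ, 0 ≤ x → Function.Bijective (A x) := by
    intro x hx
    constructor
    · rw [injective_iff_map_eq_zero]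
      intro w hw
      have h1 : g x (w : V) = 0 := by
        rw [← hA_apply x hx w, hw]
        rfl
      have h2 : (w : V) ∈ LinearMap.ker (g x : V →ₗ[ℝ] V) ⊓ V₁ :=
        ⟨LinearMap.mem_ker.mpr h1, w.2⟩
      have h3 : (w : V) = 0 := by
        have := (hbij x hx).2
        rw [disjoint_iff] at this
        rw [this] at h2
        exact h2
      exact Subtype.ext h3
    · intro w
      have hw1 : (w : V) ∈ Submodule.map (g x : V →ₗ[ℝ] V) V₁ := by
        rw [(hbij x hx).1]; exact w.2
      obtain ⟨u, hu, huw⟩ := hw1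
      refine ⟨⟨u, hu⟩, ?_⟩
      apply Subtype.ext
      rw [hA_apply x hx ⟨u, hu⟩]
      exact huw
  have hd_ne : ∀ x : ℝ, 0 ≤ x → d x ≠ 0 := by
    intro x hx
    have := LinearEquiv.isUnit_det' (LinearEquiv.ofBijective (A x) (hA_bij x hx))
    have hcoe : ((LinearEquiv.ofBijective (A x) (hA_bij x hx) : V₁ ≃ₗ[ℝ] V₁) : V₁ →ₗ[ℝ] V₁) = A x :=
      LinearMap.ext fun w => LinearEquiv.ofBijective_apply _ _
    rw [hcoe] at this
    simpa [hd_def] using this.ne_zero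
  have hd_pos : ∀ x : ℝ, 0 ≤ x → 0 < d x := by
    intro x hx
    have h2 : x / 2 + x / 2 = x := by ring
    have := hd_mul (x / 2) (x / 2) (by linarith) (by linarith)
    rw [h2] at this
    rw [this]
    exact mul_self_pos.mpr (hd_ne (x / 2) (by linarith))
  -- the key spectral inequality
  have hdm : ∀ x : ℝ, 0 ≤ x →
      |d x| ≤ f x ^ m ∧ ∀ w : V₁, |d x| * ‖w‖ ≤ ‖A x w‖ * f x ^ (m - 1) := by
    intro x hx
    exact det_norm_bound hm (A x) (f x) (hf_nonneg x hx) (hA_bound x hx)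
  have hd_le : ∀ x : ℝ, 0 ≤ x → d x ≤ f x ^ m := by
    intro x hx
    exact (le_abs_self _).trans (hdm x hx).1
  -- iterates
  have hdk : ∀ (k : ℕ) (x : ℝ), 0 ≤ x → d ((k : ℝ) * x) = d x ^ k := by
    intro k
    induction k with
    | zero => intro x hx; simpa using hd0
    | succ k ih =>
      intro x hx
      have h1 : ((k : ℝ) + 1) * x = (k : ℝ) * x + x := by ring
      push_cast
      rw [h1, hd_mul ((k : ℝ) * x) x (by positivity) hx, ih x hx, pow_succ]
  -- bound constant on [0,1]
  obtain ⟨C, hC⟩ := hf_loc (Set.Icc 0 1) isCompact_Icc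
  have hC1 : 1 ≤ C := by
    have := hC 0 ⟨le_rfl, zero_le_one⟩
    rwa [hf0, abs_one] at this
  have hC_pos : 0 < C := lt_of_lt_of_le one_pos hC1
  have hd_leC : ∀ t : ℝ, t ∈ Set.Icc (0 : ℝ) 1 → d t ≤ C ^ m := by
    intro t ht
    calc d t ≤ f t ^ m := hd_le t ht.1
      _ ≤ C ^ m := pow_le_pow_left₀ (hf_nonneg t ht.1) ((le_abs_self _).trans (hC t ht)) m
  set c : ℝ := d 1 / C ^ m with hc_def
  have hc_pos : 0 < c := div_pos (hd_pos 1 zero_le_one) (pow_pos hC_pos m)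
  have hd_ge_c : ∀ t : ℝ, t ∈ Set.Ioc (0 : ℝ) 1 → c ≤ d t := by
    intro t ht
    have h1 : t + (1 - t) = 1 := by ring
    have h2 : d 1 = d t * d (1 - t) := by
      have := hd_mul t (1 - t) ht.1.le (by linarith [ht.2])
      rwa [h1] at this
    rw [hc_def, div_le_iff₀ (pow_pos hC_pos m)]
    rw [h2]
    exact mul_le_mul_of_nonneg_left
      (hd_leC (1 - t) ⟨by linarith [ht.2], by linarith [ht.1]⟩) (hd_pos t ht.1.le).le
  -- lower bound via k-th roots
  have hd_low : ∀ x : ℝ, x ∈ Set.Ioc (0 : ℝ) 1 →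
      c ^ (((⌊x⁻¹⌋₊ : ℝ))⁻¹ : ℝ) ≤ d x := by
    intro x hx
    set k : ℕ := ⌊x⁻¹⌋₊ with hk_def
    have hx0 : 0 < x := hx.1
    have hk1 : 1 ≤ k := by
      apply Nat.le_floor
      rw [Nat.cast_one]
      exact (one_le_inv₀ hx0).mpr hx.2
    have hk0 : (k : ℝ) ≠ 0 := by
      simp only [ne_eq, Nat.cast_eq_zero]
      omega
    have hkx_le : (k : ℝ) * x ≤ 1 := by
      have h1 : (k : ℝ) ≤ x⁻¹ := Nat.floor_le (by positivity)
      calc (k : ℝ) * x ≤ x⁻¹ * x := mul_le_mul_of_nonneg_right h1 hx0.le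
        _ = 1 := inv_mul_cancel₀ hx0.ne'
    have hkx_pos : 0 < (k : ℝ) * x := by positivity
    have hc_le : c ≤ d ((k : ℝ) * x) := hd_ge_c _ ⟨hkx_pos, hkx_le⟩
    rw [hdk k x hx0.le] at hc_le
    have h1 : c ^ (((k : ℝ))⁻¹ : ℝ) ≤ (d x ^ k) ^ (((k : ℝ))⁻¹ : ℝ) :=
      Real.rpow_le_rpow hc_pos.le hc_le (by positivity)
    have h2 : (d x ^ k : ℝ) ^ (((k : ℝ))⁻¹ : ℝ) = d x := by
      rw [← Real.rpow_natCast (d x) k, ← Real.rpow_mul (hd_pos x hx0.le).le,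
        mul_inv_cancel₀ hk0, Real.rpow_one]
    rwa [h2] at h1
  -- limit of f as x → 0⁺
  have hf1 : Tendsto f (nhdsWithin 0 (Set.Ioi 0)) (nhds 1) := by
    have := hf_rc.tendsto
    rw [hf0] at this
    exact this.mono_left (nhdsWithin_mono 0 Set.Ioi_subset_Ici_self)
  -- limit of the lower bound function
  have hlow_tendsto : Tendsto (fun x : ℝ => c ^ (((⌊x⁻¹⌋₊ : ℝ))⁻¹ : ℝ))
      (nhdsWithin 0 (Set.Ioi 0)) (nhds 1) := by
    have t1 : Tendsto (fun x : ℝ => x⁻¹) (nhdsWithin 0 (Set.Ioi 0)) atTop :=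
      tendsto_inv_nhdsGT_zero
    have t2 : Tendsto (fun x : ℝ => (⌊x⁻¹⌋₊ : ℕ)) (nhdsWithin 0 (Set.Ioi 0)) atTop :=
      tendsto_nat_floor_atTop.comp t1
    have t3 : Tendsto (fun x : ℝ => ((⌊x⁻¹⌋₊ : ℝ))⁻¹) (nhdsWithin 0 (Set.Ioi 0)) (nhds 0) :=
      tendsto_inv_atTop_zero.comp (tendsto_natCast_atTop_atTop.comp t2)
    have t4 : ContinuousAt (fun t : ℝ => c ^ (t : ℝ)) 0 :=
      Real.continuousAt_const_rpow hc_pos.ne'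
    have := t4.tendsto.comp t3
    simpa [Real.rpow_zero, Function.comp_def] using this
  -- d tends to 1
  have hd_tendsto : Tendsto d (nhdsWithin 0 (Set.Ioi 0)) (nhds 1) := by
    have hup : Tendsto (fun x : ℝ => f x ^ m) (nhdsWithin 0 (Set.Ioi 0)) (nhds 1) := by
      have := hf1.pow m
      simpa using this
    apply tendsto_of_tendsto_of_tendsto_of_le_of_le' hlow_tendsto hup
    · filter_upwards [Ioc_mem_nhdsGT_of_mem (Set.mem_Ico.mpr ⟨le_rfl, zero_lt_one⟩)] with x hx
      exact hd_low x hx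
    · filter_upwards [self_mem_nhdsWithin] with x hx
      exact hd_le x (le_of_lt hx)
  -- final squeeze
  have hv_pos : 0 < ‖v‖ := norm_pos_iff.mpr hvne
  have hlow2 : Tendsto (fun x : ℝ => d x / f x ^ (m - 1))
      (nhdsWithin 0 (Set.Ioi 0)) (nhds 1) := by
    have := hd_tendsto.div (hf1.pow (m - 1)) (by simp)
    rw [one_pow, div_one] at this
    exact this
  have hf_ev_pos : ∀ᶠ x in nhdsWithin 0 (Set.Ioi 0), 0 < f x :=
    hf1.eventually (eventually_gt_nhds zero_lt_one)
  apply tendsto_of_tendsto_of_tendsto_of_le_of_le' hlow2 hf1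
  · filter_upwards [self_mem_nhdsWithin, hf_ev_pos] with x hx hfx
    have hx0 : (0 : ℝ) ≤ x := (le_of_lt hx)
    have hkey := (hdm x hx0).2 vE
    have habs : |d x| = d x := abs_of_pos (hd_pos x hx0)
    rw [habs, hA_norm x hx0 vE] at hkey
    have hnv : ‖vE‖ = ‖v‖ := rfl
    rw [hnv] at hkey
    rw [div_le_div_iff₀ (pow_pos hfx (m - 1)) hv_pos]
    exact hkey
  · filter_upwards [self_mem_nhdsWithin] with x hx
    rw [div_le_iff₀ hv_pos]
    calc ‖g x v‖ ≤ ‖g x‖ * ‖v‖ := (g x).le_opNorm v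
      _ ≤ f x * ‖v‖ := mul_le_mul_of_nonneg_right (hgf x (le_of_lt hx)) (norm_nonneg v)
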